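/- arXiv:1503.05243 — 2 statements merged into one kernel-verified Lean document; each statement's English description precedes it below -/
import Mathlib

section
/- Let (K,|·|) be a normed field, f ∈ K[z] a polynomial of degree n ≥ 2 which splits over K, ξ ∈ Kⁿ a root-vector of f, and 1 ≤ p ≤ ∞ with conjugate exponent q. Suppose the initial guess x⁰ ∈ Kⁿ has pairwise distinct components and satisfies E(x⁰) = ‖(x⁰ − ξ)/d(x⁰)‖_p ≤ n(2^{1/n} − 1)/((n−1)^{1/q} + 2^{1/q}). Then f has only simple zeros in K and the Weierstrass iteration x^{k+1} = x^k − W(x^k) is well defined and converges to ξ, with, for all k ≥ 0 and each index i: |x^{k+1}_i − ξ_i| ≤ θ λ^{2^k} |x^k_i − ξ_i| and |x^k_i − ξ_i| ≤ θ^k λ^{2^k − 1} |x⁰_i − ξ_i|, where λ = β(E(x⁰))/ψ(E(x⁰)), θ = ψ(E(x⁰)), β(t) = (1 + t/(n−1)^{1/p})^{n−1} − 1 and ψ(t) = 1 − 2^{1/q} t (1 + t/(n−1)^{1/p})^{n−1}. -/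
open Finset Filter Topology
open scoped ENNReal

noncomputable def pnorm {n : ℕ} (p : ℝ≥0∞) (v : Fin n → ℝ) : ℝ :=
  if p = ⊤ then ⨆ i, |v i| else (∑ i, |v i| ^ p.toReal) ^ (1 / p.toReal)

noncomputable def epow (a : ℝ) (p : ℝ≥0∞) : ℝ :=
  if p = ⊤ then 1 else a ^ (1 / p.toReal)

noncomputable def dsep {K : Type*} [NormedField K] {n : ℕ} (x : Fin n → K) (i : Fin n) : ℝ :=
  sInf {r : ℝ | ∃ j, j ≠ i ∧ r = ‖x i - x j‖}

noncomputable def Wcorr {K : Type*} [NormedField K] {n : ℕ} (f : Polynomial K)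
    (x : Fin n → K) (i : Fin n) : K :=
  Polynomial.eval (x i) f / (f.leadingCoeff * ∏ j ∈ Finset.univ.erase i, (x i - x j))

def IsRootVector {K : Type*} [NormedField K] {n : ℕ} (f : Polynomial K) (ξ : Fin n → K) : Prop :=
  ∀ z : K, Polynomial.eval z f = f.leadingCoeff * ∏ i, (z - ξ i)

section Aux

variable {K : Type*} [NormedField K] {n : ℕ}

private lemma dsep_bddBelow (x : Fin n → K) (i : Fin n) :
    BddBelow {r : ℝ | ∃ j, j ≠ i ∧ r = ‖x i - x j‖} := by
  refine ⟨0, fun r hr => ?_⟩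
  obtain ⟨j, -, rfl⟩ := hr
  exact norm_nonneg _

private lemma dsep_le {x : Fin n → K} {i j : Fin n} (hj : j ≠ i) :
    dsep x i ≤ ‖x i - x j‖ :=
  csInf_le (dsep_bddBelow x i) ⟨j, hj, rfl⟩

private lemma dsep_set_nonempty (hn : 2 ≤ n) (x : Fin n → K) (i : Fin n) :
    {r : ℝ | ∃ j, j ≠ i ∧ r = ‖x i - x j‖}.Nonempty := by
  haveI : Nontrivial (Fin n) := Fin.nontrivial_iff_two_le.2 hn
  obtain ⟨j, hj⟩ := exists_ne i
  exact ⟨‖x i - x j‖, j, hj, rfl⟩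

private lemma dsep_mem (hn : 2 ≤ n) (x : Fin n → K) (i : Fin n) :
    ∃ j, j ≠ i ∧ dsep x i = ‖x i - x j‖ := by
  have hfin : {r : ℝ | ∃ j, j ≠ i ∧ r = ‖x i - x j‖}.Finite := by
    refine (Set.finite_range (fun j => ‖x i - x j‖)).subset ?_
    rintro r ⟨j, -, rfl⟩; exact ⟨j, rfl⟩
  exact (dsep_set_nonempty hn x i).csInf_mem hfin

private lemma dsep_pos (hn : 2 ≤ n) {x : Fin n → K} (hx : Function.Injective x) (i : Fin n) :
    0 < dsep x i := by
  obtain ⟨j, hj, hd⟩ := dsep_mem hn x i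
  rw [hd, norm_pos_iff, sub_ne_zero]
  exact fun h => hj (hx h.symm)

private lemma le_dsep (hn : 2 ≤ n) {x : Fin n → K} {i : Fin n} {c : ℝ}
    (h : ∀ j, j ≠ i → c ≤ ‖x i - x j‖) : c ≤ dsep x i := by
  refine le_csInf (dsep_set_nonempty hn x i) ?_
  rintro r ⟨j, hj, rfl⟩; exact h j hj

private lemma pnorm_nonneg (p : ℝ≥0∞) (v : Fin n → ℝ) : 0 ≤ pnorm p v := by
  unfold pnorm
  split_ifs
  · exact Real.iSup_nonneg fun i => abs_nonneg _
  · exact Real.rpow_nonneg (Finset.sum_nonneg fun i _ => Real.rpow_nonneg (abs_nonneg _) _) _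

private lemma toReal_pos_of_ne_top {p : ℝ≥0∞} (hp : 1 ≤ p) (hpt : p ≠ ⊤) : 0 < p.toReal :=
  ENNReal.toReal_pos (fun h => by simp [h] at hp) hpt

private lemma coord_le_pnorm {p : ℝ≥0∞} (hp : 1 ≤ p) (v : Fin n → ℝ) (i : Fin n) :
    |v i| ≤ pnorm p v := by
  unfold pnorm
  split_ifs with h
  · exact le_ciSup (f := fun i => |v i|) (Set.Finite.bddAbove (Set.finite_range _)) i
  · have hr : 0 < p.toReal := toReal_pos_of_ne_top hp h
    have h1 : |v i| = (|v i| ^ p.toReal) ^ (1 / p.toReal) := by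
      rw [one_div, Real.rpow_rpow_inv (abs_nonneg _) hr.ne']
    rw [h1]
    refine Real.rpow_le_rpow (Real.rpow_nonneg (abs_nonneg _) _) ?_ (by positivity)
    exact Finset.single_le_sum (fun j _ => Real.rpow_nonneg (abs_nonneg _) _) (Finset.mem_univ i)

private lemma pnorm_le_mul {p : ℝ≥0∞} (hn : 0 < n) (hp : 1 ≤ p) {u w : Fin n → ℝ} {c : ℝ}
    (hc : 0 ≤ c) (hu : ∀ i, 0 ≤ u i) (hw : ∀ i, 0 ≤ w i) (h : ∀ i, u i ≤ c * w i) :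
    pnorm p u ≤ c * pnorm p w := by
  haveI : Nonempty (Fin n) := Fin.pos_iff_nonempty.1 hn
  unfold pnorm
  split_ifs with ht
  · refine ciSup_le fun i => ?_
    rw [abs_of_nonneg (hu i)]
    refine (h i).trans (mul_le_mul_of_nonneg_left ?_ hc)
    calc w i = |w i| := (abs_of_nonneg (hw i)).symm
    _ ≤ _ := le_ciSup (f := fun i => |w i|) (Set.Finite.bddAbove (Set.finite_range _)) i
  · have hr : 0 < p.toReal := toReal_pos_of_ne_top hp ht
    have step : ∑ i, |u i| ^ p.toReal ≤ c ^ p.toReal * ∑ i, |w i| ^ p.toReal := by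
      rw [Finset.mul_sum]
      refine Finset.sum_le_sum fun i _ => ?_
      rw [abs_of_nonneg (hu i), abs_of_nonneg (hw i), ← Real.mul_rpow hc (hw i)]
      exact Real.rpow_le_rpow (hu i) (h i) hr.le
    calc (∑ i, |u i| ^ p.toReal) ^ (1 / p.toReal)
        ≤ (c ^ p.toReal * ∑ i, |w i| ^ p.toReal) ^ (1 / p.toReal) := by
          refine Real.rpow_le_rpow ?_ step (by positivity)
          exact Finset.sum_nonneg fun i _ => Real.rpow_nonneg (abs_nonneg _) _
      _ = c * (∑ i, |w i| ^ p.toReal) ^ (1 / p.toReal) := by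
          rw [Real.mul_rpow (Real.rpow_nonneg hc _)
            (Finset.sum_nonneg fun i _ => Real.rpow_nonneg (abs_nonneg _) _), one_div,
            Real.rpow_rpow_inv hc hr.ne']

private lemma conj_cases {p q : ℝ≥0∞} (hp : 1 ≤ p) (hpq : 1 / p + 1 / q = 1) :
    (p = 1 ∧ q = ⊤) ∨ (p = ⊤ ∧ q = 1) ∨
      (p ≠ ⊤ ∧ q ≠ ⊤ ∧ (p.toReal).HolderConjugate q.toReal) := by
  have hp0 : p ≠ 0 := fun h => by simp [h] at hp
  have hq0 : q ≠ 0 := by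
    rintro rfl
    rw [ENNReal.div_zero one_ne_zero] at hpq
    simp at hpq
  rcases eq_or_ne p 1 with rfl | hp1
  · left
    refine ⟨rfl, ?_⟩
    have h1 : 1 / q = (0:ℝ≥0∞) := by
      have h2 : (1:ℝ≥0∞) + 1/q = 1 + 0 := by simpa using hpq
      exact (ENNReal.add_right_inj ENNReal.one_ne_top).1 h2
    rw [one_div, ENNReal.inv_eq_zero] at h1
    exact h1
  rcases eq_or_ne p ⊤ with rfl | hpt
  · right; left
    refine ⟨rfl, ?_⟩
    have h1 : 1 / q = (1:ℝ≥0∞) := by simpa using hpq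
    rw [one_div, ENNReal.inv_eq_one] at h1
    exact h1
  · right; right
    have hqt : q ≠ ⊤ := by
      rintro rfl
      rw [ENNReal.div_top, add_zero, one_div, ENNReal.inv_eq_one] at hpq
      exact hp1 hpq
    refine ⟨hpt, hqt, Real.holderConjugate_iff.2 ⟨?_, ?_⟩⟩
    · have hlt : (1:ℝ≥0∞) < p := lt_of_le_of_ne hp (Ne.symm hp1)
      have := (ENNReal.toReal_lt_toReal (a := 1) (by simp) hpt).2 hlt
      simpa using this
    · have h2 := congrArg ENNReal.toReal hpq
      rw [ENNReal.toReal_add (by simp [one_div, ENNReal.inv_ne_top, hp0])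
        (by simp [one_div, ENNReal.inv_ne_top, hq0])] at h2
      simpa [one_div, ENNReal.toReal_inv] using h2

end Aux

section Aux2

variable {K : Type*} [NormedField K] {n : ℕ}

private lemma holder_sum {p q : ℝ≥0∞} (hp : 1 ≤ p) (hpq : 1 / p + 1 / q = 1)
    (v : Fin n → ℝ) (hv : ∀ i, 0 ≤ v i) (T : Finset (Fin n)) :
    ∑ j ∈ T, v j ≤ epow (T.card : ℝ) q * pnorm p v := by
  rcases conj_cases hp hpq with ⟨hp1, hq⟩ | ⟨hpt, hq⟩ | ⟨hpt, hqt, hc⟩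
  · -- p = 1, q = ⊤ : epow = 1, pnorm = ∑ |v|
    subst hp1; subst hq
    have h1 : epow ((T.card : ℕ) : ℝ) ⊤ = 1 := by simp [epow]
    have h2 : pnorm 1 v = ∑ i, |v i| := by
      simp [pnorm, ENNReal.one_ne_top, ENNReal.toReal_one]
    rw [h1, h2, one_mul]
    calc ∑ j ∈ T, v j ≤ ∑ j ∈ T, |v j| := Finset.sum_le_sum fun j _ => le_abs_self _
      _ ≤ ∑ i, |v i| := Finset.sum_le_sum_of_subset_of_nonneg (Finset.subset_univ T)
          (fun i _ _ => abs_nonneg _)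
  · -- p = ⊤, q = 1
    subst hpt; subst hq
    have h1 : epow ((T.card : ℕ) : ℝ) 1 = T.card := by
      simp [epow, ENNReal.one_ne_top, ENNReal.toReal_one]
    rw [h1]
    have h2 : ∀ j ∈ T, v j ≤ pnorm ⊤ v := by
      intro j _
      calc v j ≤ |v j| := le_abs_self _
        _ ≤ pnorm ⊤ v := coord_le_pnorm le_top v j
    calc ∑ j ∈ T, v j ≤ ∑ _j ∈ T, pnorm ⊤ v := Finset.sum_le_sum h2
      _ = T.card * pnorm ⊤ v := by rw [Finset.sum_const, nsmul_eq_mul]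
  · -- both finite
    have hq1 : (0:ℝ) < q.toReal := by
      have := hc.symm.lt
      linarith
    have key := Real.inner_le_Lp_mul_Lq_of_nonneg Finset.univ hc
      (f := fun i => v i) (g := fun i => if i ∈ T then (1:ℝ) else 0)
      (fun i _ => hv i) (fun i _ => by positivity)
    have hL : ∑ i, v i * (if i ∈ T then (1:ℝ) else 0) = ∑ j ∈ T, v j := by
      simp [mul_ite, mul_one, mul_zero, Finset.sum_ite_mem, Finset.univ_inter]
    have hR1 : ∑ i, (if i ∈ T then (1:ℝ) else 0) ^ q.toReal = (T.card : ℝ) := by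
      have : ∀ i : Fin n, (if i ∈ T then (1:ℝ) else 0) ^ q.toReal
          = (if i ∈ T then (1:ℝ) else 0) := by
        intro i
        split_ifs
        · exact Real.one_rpow _
        · exact Real.zero_rpow hq1.ne'
      simp only [this]
      simp [Finset.sum_ite_mem, Finset.univ_inter]
    have hR2 : (∑ i, v i ^ p.toReal) ^ (1 / p.toReal) = pnorm p v := by
      unfold pnorm
      rw [if_neg hpt]
      congr 1
      exact Finset.sum_congr rfl fun i _ => by rw [abs_of_nonneg (hv i)]
    have hR3 : epow ((T.card : ℕ) : ℝ) q = ((T.card : ℝ)) ^ (1 / q.toReal) := by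
      simp [epow, hqt]
    rw [hL, hR1, hR2] at key
    rw [hR3, mul_comm]
    exact key

end Aux2

section Aux3

variable {K : Type*} [NormedField K] {n : ℕ}

private lemma epow_pos {a : ℝ} (ha : 0 < a) (q : ℝ≥0∞) : 0 < epow a q := by
  unfold epow
  split_ifs
  · exact one_pos
  · exact Real.rpow_pos_of_pos ha _

private lemma epow_mul_epow {a : ℝ} (ha : 0 < a) {p q : ℝ≥0∞}
    (hp : 1 ≤ p) (hpq : 1 / p + 1 / q = 1) : epow a p * epow a q = a := by
  rcases conj_cases hp hpq with ⟨hp1, hq⟩ | ⟨hpt, hq⟩ | ⟨hpt, hqt, hc⟩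
  · subst hp1; subst hq
    simp [epow, ENNReal.one_ne_top, ENNReal.toReal_one]
  · subst hpt; subst hq
    simp [epow, ENNReal.one_ne_top, ENNReal.toReal_one]
  · unfold epow
    rw [if_neg hpt, if_neg hqt, ← Real.rpow_add ha]
    rw [one_div, one_div, hc.inv_add_inv_eq_one, Real.rpow_one]

/-- convexity-type slope inequality -/
private lemma pow_slope (m : ℕ) {c u : ℝ} (hc0 : 0 ≤ c) (hc1 : c ≤ 1) (hu : 0 ≤ u) :
    (1 + c * u) ^ m - 1 ≤ c * ((1 + u) ^ m - 1) := by
  induction m with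
  | zero => simp
  | succ m ih =>
    have h1 : (0:ℝ) ≤ 1 + c * u := by positivity
    have h2 : (1:ℝ) + c * u ≤ 1 + u := by nlinarith
    have h3 : (1:ℝ) ≤ (1 + u) ^ m := one_le_pow₀ (by linarith : (1:ℝ) ≤ 1 + u)
    have key : (1 + c*u) ^ (m+1) - 1
        = ((1 + c*u) ^ m - 1) * (1 + c*u) + c*u := by ring
    rw [key]
    have h4 : ((1 + c*u) ^ m - 1) * (1 + c*u) ≤ c * ((1+u)^m - 1) * (1 + u) := by
      rcases le_or_gt ((1 + c*u)^m - 1) 0 with h | h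
      · have h5 : (0:ℝ) ≤ c * ((1+u)^m - 1) * (1 + u) := by
          have : (0:ℝ) ≤ (1+u)^m - 1 := by linarith
          have hu1 : (0:ℝ) ≤ 1 + u := by linarith
          positivity
        calc ((1 + c*u) ^ m - 1) * (1 + c*u) ≤ 0 := mul_nonpos_of_nonpos_of_nonneg h h1
          _ ≤ c * ((1+u)^m - 1) * (1 + u) := h5
      · exact mul_le_mul ih h2 h1 (by nlinarith)
    calc ((1 + c*u) ^ m - 1) * (1 + c*u) + c*u
        ≤ c * ((1+u)^m - 1) * (1 + u) + c * u := by linarith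
      _ = c * ((1 + u) ^ (m+1) - 1) := by ring

end Aux3

section Aux4

variable {K : Type*} [NormedField K] {n : ℕ}

private lemma amgm_pow_mul {a b : ℝ} (ha : 0 ≤ a) (hb : 0 ≤ b) (m : ℕ) :
    a ^ m * b ≤ (((m : ℝ) * a + b) / ((m : ℝ) + 1)) ^ (m + 1) := by
  have hm1 : (0:ℝ) < (m:ℝ) + 1 := by positivity
  have hw1 : (0:ℝ) ≤ (m:ℝ)/((m:ℝ)+1) := by positivity
  have hw2 : (0:ℝ) ≤ 1/((m:ℝ)+1) := by positivity
  have hsum : (m:ℝ)/((m:ℝ)+1) + 1/((m:ℝ)+1) = 1 := by field_simp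
  have h := Real.geom_mean_le_arith_mean2_weighted hw1 hw2 ha hb hsum
  have hG : (0:ℝ) ≤ a ^ ((m:ℝ)/((m:ℝ)+1)) * b ^ (1/((m:ℝ)+1)) := by positivity
  have h2 := pow_le_pow_left₀ hG h (m+1)
  have hL : (a ^ ((m:ℝ)/((m:ℝ)+1)) * b ^ (1/((m:ℝ)+1))) ^ (m+1) = a ^ m * b := by
    rw [mul_pow, ← Real.rpow_natCast (a ^ ((m:ℝ)/((m:ℝ)+1))) (m+1),
      ← Real.rpow_natCast (b ^ (1/((m:ℝ)+1))) (m+1),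
      ← Real.rpow_mul ha, ← Real.rpow_mul hb]
    push_cast
    rw [div_mul_cancel₀ _ hm1.ne', div_mul_cancel₀ _ hm1.ne', Real.rpow_one,
      Real.rpow_natCast]
  have hR : ((m:ℝ)/((m:ℝ)+1) * a + 1/((m:ℝ)+1) * b) = ((m:ℝ) * a + b) / ((m:ℝ) + 1) := by
    field_simp
  rw [hL, hR] at h2
  exact h2

private lemma amgm_prod {ι : Type*} (s : Finset ι) (hs : s.Nonempty) (v : ι → ℝ)
    (hv : ∀ i ∈ s, 0 ≤ v i) :
    ∏ i ∈ s, (1 + v i) ≤ (1 + (∑ i ∈ s, v i) / s.card) ^ s.card := by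
  have hcard : (0:ℝ) < s.card := by exact_mod_cast Finset.card_pos.2 hs
  have hz : ∀ i ∈ s, (0:ℝ) ≤ 1 + v i := fun i hi => by have := hv i hi; linarith
  have h := Real.geom_mean_le_arith_mean_weighted s (fun _ => (s.card : ℝ)⁻¹)
    (fun i => 1 + v i) (fun i _ => by positivity)
    (by rw [Finset.sum_const, nsmul_eq_mul]; field_simp) hz
  have hL : ∏ i ∈ s, (1 + v i) ^ ((s.card : ℝ)⁻¹) = (∏ i ∈ s, (1 + v i)) ^ ((s.card:ℝ)⁻¹) :=
    Real.finset_prod_rpow s _ hz _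
  have hR : ∑ i ∈ s, (s.card : ℝ)⁻¹ * (1 + v i) = 1 + (∑ i ∈ s, v i) / s.card := by
    rw [← Finset.mul_sum, Finset.sum_add_distrib, Finset.sum_const, nsmul_eq_mul, mul_one]
    field_simp
  rw [hL, hR] at h
  have hP : (0:ℝ) ≤ ∏ i ∈ s, (1 + v i) := Finset.prod_nonneg hz
  have h2 := pow_le_pow_left₀ (Real.rpow_nonneg hP _) h s.card
  rwa [← Real.rpow_natCast ((∏ i ∈ s, (1 + v i)) ^ ((s.card:ℝ)⁻¹)) s.card,
    ← Real.rpow_mul hP, inv_mul_cancel₀ hcard.ne', Real.rpow_one] at h2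

private lemma norm_prod_one_add_le {ι : Type*} (s : Finset ι) (a : ι → K) :
    ‖∏ j ∈ s, (1 + a j)‖ ≤ ∏ j ∈ s, (1 + ‖a j‖) := by
  rw [norm_prod]
  refine Finset.prod_le_prod (fun j _ => norm_nonneg _) fun j _ => ?_
  calc ‖1 + a j‖ ≤ ‖(1:K)‖ + ‖a j‖ := norm_add_le _ _
    _ = 1 + ‖a j‖ := by rw [norm_one]

private lemma norm_prod_one_add_sub_one_le {ι : Type*} (s : Finset ι) (a : ι → K) :
    ‖∏ j ∈ s, (1 + a j) - 1‖ ≤ ∏ j ∈ s, (1 + ‖a j‖) - 1 := by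
  induction s using Finset.cons_induction with
  | empty => simp
  | cons k s hk ih =>
    rw [Finset.prod_cons, Finset.prod_cons]
    have key : (1 + a k) * ∏ j ∈ s, (1 + a j) - 1
        = (∏ j ∈ s, (1 + a j) - 1) + a k * ∏ j ∈ s, (1 + a j) := by ring
    rw [key]
    calc ‖(∏ j ∈ s, (1 + a j) - 1) + a k * ∏ j ∈ s, (1 + a j)‖
        ≤ ‖∏ j ∈ s, (1 + a j) - 1‖ + ‖a k‖ * ‖∏ j ∈ s, (1 + a j)‖ := by
          rw [← norm_mul]; exact norm_add_le _ _
      _ ≤ (∏ j ∈ s, (1 + ‖a j‖) - 1) + ‖a k‖ * ∏ j ∈ s, (1 + ‖a j‖) := by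
          refine add_le_add ih (mul_le_mul_of_nonneg_left ?_ (norm_nonneg _))
          exact norm_prod_one_add_le s a
      _ = (1 + ‖a k‖) * ∏ j ∈ s, (1 + ‖a j‖) - 1 := by ring

end Aux4


set_option maxHeartbeats 1600000

/-- If `x⁰` has pairwise distinct components and
`E(x⁰) = ‖(x⁰−ξ)/d(x⁰)‖_p ≤ n(2^{1/n} − 1)/((n−1)^{1/q} + 2^{1/q})`, then `f` has only
simple zeros and the Weierstrass iteration converges to `ξ` with the second-kind
error estimates. -/
theorem weierstrass_local_convergence_han
    {K : Type*} [NormedField K] {n : ℕ} (hn : 2 ≤ n)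
    (f : Polynomial K) (hdeg : f.natDegree = n)
    (ξ : Fin n → K) (hroot : IsRootVector f ξ)
    (p q : ℝ≥0∞) (hp : 1 ≤ p) (hpq : 1 / p + 1 / q = 1)
    (E : (Fin n → K) → ℝ)
    (hE : ∀ y : Fin n → K, E y = pnorm p (fun i => ‖y i - ξ i‖ / dsep y i))
    (ψ β : ℝ → ℝ)
    (hψ : ∀ t : ℝ, ψ t = 1 - epow 2 q * t * (1 + t / epow ((n : ℝ) - 1) p) ^ (n - 1))
    (hβ : ∀ t : ℝ, β t = (1 + t / epow ((n : ℝ) - 1) p) ^ (n - 1) - 1)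
    (x : ℕ → Fin n → K) (hx0 : Function.Injective (x 0))
    (hinit : E (x 0) ≤
      (n : ℝ) * ((2:ℝ) ^ ((1:ℝ) / (n : ℝ)) - 1) / (epow ((n : ℝ) - 1) q + epow 2 q))
    (hiter : ∀ k : ℕ, x (k+1) = fun i => x k i - Wcorr f (x k) i) :
    Function.Injective ξ ∧
    (∀ k : ℕ, Function.Injective (x k)) ∧
    (∀ i : Fin n, Filter.Tendsto (fun k => x k i) Filter.atTop (nhds (ξ i))) ∧
    (∀ k : ℕ, ∀ i : Fin n,
      ‖x (k+1) i - ξ i‖ ≤ ψ (E (x 0)) * (β (E (x 0)) / ψ (E (x 0))) ^ 2 ^ k * ‖x k i - ξ i‖) ∧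
    (∀ k : ℕ, ∀ i : Fin n,
      ‖x k i - ξ i‖ ≤ ψ (E (x 0)) ^ k * (β (E (x 0)) / ψ (E (x 0))) ^ (2 ^ k - 1) *
        ‖x 0 i - ξ i‖) := by
  have hn0 : 0 < n := by omega
  -- leading coefficient nonzero
  have hf0 : f ≠ 0 := by
    intro h
    rw [h, Polynomial.natDegree_zero] at hdeg
    omega
  have ha0 : f.leadingCoeff ≠ 0 := Polynomial.leadingCoeff_ne_zero.2 hf0
  -- abbreviations
  set m : ℕ := n - 1 with hm_def
  have hm1 : 1 ≤ m := by omega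
  have hmn : m + 1 = n := by omega
  have hmcast : (m : ℝ) = (n : ℝ) - 1 := by
    rw [hm_def, Nat.cast_sub (by omega : 1 ≤ n), Nat.cast_one]
  have hncast : (2:ℝ) ≤ (n:ℝ) := by exact_mod_cast hn
  set A : ℝ := epow ((n : ℝ) - 1) p with hA_def
  set Aq : ℝ := epow ((n : ℝ) - 1) q with hAq_def
  set B : ℝ := epow 2 q with hB_def
  have hn1pos : (0:ℝ) < (n:ℝ) - 1 := by linarith
  have hA : 0 < A := epow_pos hn1pos p
  have hB : 0 < B := epow_pos two_pos q
  have hAAq : A * Aq = (n:ℝ) - 1 := epow_mul_epow hn1pos hp hpq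
  have hAqpos : 0 < Aq := epow_pos hn1pos q
  -- closed forms
  set G : ℝ → ℝ := fun t => (1 + t / A) ^ m with hG_def
  have hψ' : ∀ t, ψ t = 1 - B * t * G t := fun t => hψ t
  have hβ' : ∀ t, β t = G t - 1 := fun t => hβ t
  set E0 : ℝ := E (x 0) with hE0_def
  have hE00 : 0 ≤ E0 := by rw [hE0_def, hE]; exact pnorm_nonneg p _
  -- the AM-GM boundary estimate
  have key2 : ∀ t : ℝ, 0 ≤ t → t ≤ E0 → G t * (1 + B * t) ≤ 2 := by
    intro t ht0 htE
    set R : ℝ := (n : ℝ) * ((2:ℝ) ^ ((1:ℝ) / (n : ℝ)) - 1) / (Aq + B) with hR_def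
    have htR : t ≤ R := le_trans htE hinit
    have hABpos : 0 < Aq + B := by linarith
    have hR0 : 0 ≤ R := le_trans ht0 htR
    have hamgm := amgm_pow_mul (a := 1 + t / A) (b := 1 + B * t)
      (by positivity) (by positivity) m
    have hmid : ((m:ℝ) * (1 + t / A) + (1 + B * t)) / ((m:ℝ) + 1)
        = 1 + (Aq + B) * t / n := by
      have hAq_eq : Aq = ((n:ℝ) - 1) / A := by
        rw [← hAAq]; field_simp
      rw [hAq_eq, hmcast]
      have hnn : ((n:ℝ) - 1) + 1 = (n:ℝ) := by ring
      field_simp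
      ring_nf
    rw [hmid, hmn] at hamgm
    have hstep2 : (1 + (Aq + B) * t / n) ^ n ≤ (1 + (Aq + B) * R / n) ^ n := by
      have h1 : (0:ℝ) ≤ 1 + (Aq + B) * t / n := by positivity
      have h2 : (Aq + B) * t ≤ (Aq + B) * R := mul_le_mul_of_nonneg_left htR hABpos.le
      have hnr : (0:ℝ) < (n:ℝ) := by linarith
      have h3 : (Aq + B) * t / n ≤ (Aq + B) * R / n := by gcongr
      exact pow_le_pow_left₀ h1 (by linarith) n
    have hfin : (1 + (Aq + B) * R / n) ^ n = 2 := by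
      have hR2 : (Aq + B) * R / n = (2:ℝ) ^ ((1:ℝ) / (n : ℝ)) - 1 := by
        rw [hR_def]
        field_simp
      rw [hR2]
      have : (1:ℝ) + ((2:ℝ) ^ ((1:ℝ) / (n : ℝ)) - 1) = (2:ℝ) ^ ((1:ℝ) / (n : ℝ)) := by ring
      rw [this, ← Real.rpow_natCast ((2:ℝ) ^ ((1:ℝ) / (n : ℝ))) n, ← Real.rpow_mul (by norm_num),
        one_div, inv_mul_cancel₀ (by positivity : ((n:ℝ)) ≠ 0), Real.rpow_one]
    calc G t * (1 + B * t) ≤ (1 + (Aq + B) * t / n) ^ n := hamgm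
      _ ≤ (1 + (Aq + B) * R / n) ^ n := hstep2
      _ = 2 := hfin
  -- scalar facts
  have hg1 : ∀ t : ℝ, 0 ≤ t → 1 ≤ G t := by
    intro t ht
    have h0 : 0 ≤ t / A := by positivity
    exact one_le_pow₀ (by linarith : (1:ℝ) ≤ 1 + t / A)
  have hgmono : ∀ s t : ℝ, 0 ≤ s → s ≤ t → G s ≤ G t := by
    intro s t hs hst
    exact pow_le_pow_left₀ (by positivity) (by gcongr) m
  have hβ0 : ∀ t : ℝ, 0 ≤ t → 0 ≤ β t := by
    intro t ht; rw [hβ']; linarith [hg1 t ht]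
  have hβψ : ∀ t : ℝ, 0 ≤ t → t ≤ E0 → β t ≤ ψ t := by
    intro t ht0 htE
    have h := key2 t ht0 htE
    have hg := hg1 t ht0
    rw [hβ', hψ']
    nlinarith
  have hψpos : ∀ t : ℝ, 0 ≤ t → t ≤ E0 → 0 < ψ t := by
    intro t ht0 htE
    rcases ht0.eq_or_lt with h | h
    · rw [hψ', ← h]; simp
    · have hgt : 1 < G t := by
        rw [hG_def]
        exact one_lt_pow₀ (by have := div_pos h hA; linarith : (1:ℝ) < 1 + t / A) (by omega)
      have := hβψ t ht0 htE
      rw [hβ'] at this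
      linarith
  have hψle1 : ∀ t : ℝ, 0 ≤ t → ψ t ≤ 1 := by
    intro t ht
    rw [hψ']
    have h0 : 0 ≤ B * t * G t :=
      mul_nonneg (mul_nonneg hB.le ht) (le_trans zero_le_one (hg1 t ht))
    linarith
  have hψanti : ∀ s t : ℝ, 0 ≤ s → s ≤ t → ψ t ≤ ψ s := by
    intro s t hs hst
    rw [hψ', hψ']
    have hgs0 : (0:ℝ) ≤ G s := le_trans zero_le_one (hg1 s hs)
    have hBst : B * s ≤ B * t := mul_le_mul_of_nonneg_left hst hB.le
    have h3 : B * s * G s ≤ B * t * G t :=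
      mul_le_mul hBst (hgmono s t hs hst) hgs0 (mul_nonneg hB.le (hs.trans hst))
    linarith
  have hslope : 0 < E0 → ∀ s : ℝ, 0 ≤ s → s ≤ E0 → β s * E0 ≤ β E0 * s := by
    intro hE0pos s hs hsE
    have hc0 : 0 ≤ s / E0 := by positivity
    have hc1 : s / E0 ≤ 1 := by rw [div_le_one hE0pos]; exact hsE
    have hu : 0 ≤ E0 / A := by positivity
    have h := pow_slope m hc0 hc1 hu
    have hrw : s / E0 * (E0 / A) = s / A := by field_simp
    rw [hrw] at h
    rw [hβ', hβ', hG_def]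
    calc ((1 + s / A) ^ m - 1) * E0 ≤ (s / E0 * ((1 + E0 / A) ^ m - 1)) * E0 := by
          have := hg1 E0 hE00
          exact mul_le_mul_of_nonneg_right h hE00
      _ = ((1 + E0 / A) ^ m - 1) * s := by field_simp
  have hG0 : ∀ t : ℝ, 0 ≤ t → (0:ℝ) ≤ G t := fun t ht => le_trans zero_le_one (hg1 t ht)
  -- one step of the Weierstrass iteration
  have step : ∀ y : Fin n → K, Function.Injective y → E y ≤ E0 →
      Function.Injective (fun i => y i - Wcorr f y i) ∧
      (∀ i, ‖(y i - Wcorr f y i) - ξ i‖ ≤ β (E y) * ‖y i - ξ i‖) ∧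
      E (fun i => y i - Wcorr f y i) ≤ (β (E y) / ψ (E y)) * E y := by
    intro y hyinj hyE
    set t : ℝ := E y with ht_def
    have ht0 : 0 ≤ t := by rw [ht_def, hE]; exact pnorm_nonneg p _
    set v : Fin n → ℝ := fun i => ‖y i - ξ i‖ / dsep y i with hv_def
    have htv : t = pnorm p v := by rw [ht_def, hE]
    have hd : ∀ i, 0 < dsep y i := dsep_pos hn hyinj
    have hv0 : ∀ i, 0 ≤ v i := fun i => div_nonneg (norm_nonneg _) (hd i).le
    have hvi : ∀ i, ‖y i - ξ i‖ = v i * dsep y i := by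
      intro i
      rw [hv_def]
      exact (div_mul_cancel₀ _ (hd i).ne').symm
    have hGt0 : (0:ℝ) ≤ G t := hG0 t ht0
    -- single coordinate analysis
    have main : ∀ i, ‖(y i - Wcorr f y i) - ξ i‖ ≤ β t * ‖y i - ξ i‖ ∧
        ‖Wcorr f y i‖ ≤ G t * ‖y i - ξ i‖ := by
      intro i
      have hne : ∀ j ∈ Finset.univ.erase i, y i - y j ≠ 0 := by
        intro j hj
        have hji : j ≠ i := (Finset.mem_erase.1 hj).1
        exact sub_ne_zero.2 fun h => hji (hyinj h.symm)
      set u : Fin n → K := fun j => (y j - ξ j) / (y i - y j) with hu_def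
      have hWid : Wcorr f y i
          = (y i - ξ i) * ∏ j ∈ Finset.univ.erase i, (1 + u j) := by
        simp only [Wcorr]
        rw [hroot (y i)]
        have hsplit : ∏ j, (y i - ξ j)
            = (y i - ξ i) * ∏ j ∈ Finset.univ.erase i, (y i - ξ j) :=
          (Finset.mul_prod_erase Finset.univ _ (Finset.mem_univ i)).symm
        rw [hsplit, mul_div_mul_left _ _ ha0, mul_div_assoc, ← Finset.prod_div_distrib]
        congr 1
        refine Finset.prod_congr rfl fun j hj => ?_
        have h := hne j hj
        rw [hu_def]
        field_simp
        ring
      have hstepid : (y i - Wcorr f y i) - ξ i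
          = -((y i - ξ i) * (∏ j ∈ Finset.univ.erase i, (1 + u j) - 1)) := by
        rw [hWid]; ring
      have huv : ∀ j ∈ Finset.univ.erase i, ‖u j‖ ≤ v j := by
        intro j hj
        have hji : j ≠ i := (Finset.mem_erase.1 hj).1
        have hdj : dsep y j ≤ ‖y i - y j‖ := by
          rw [norm_sub_rev]; exact dsep_le (Ne.symm hji)
        have hshow : ‖u j‖ = ‖y j - ξ j‖ / ‖y i - y j‖ := by
          rw [hu_def, norm_div]
        have hfin : ‖y j - ξ j‖ / ‖y i - y j‖ ≤ ‖y j - ξ j‖ / dsep y j := by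
          gcongr
          exact hd j
        rw [hshow]
        exact hfin
      have hcard : (Finset.univ.erase i).card = m := by
        rw [Finset.card_erase_of_mem (Finset.mem_univ i), Finset.card_univ, Fintype.card_fin]
      have hSsum : ∑ j ∈ Finset.univ.erase i, v j ≤ Aq * t := by
        have h := holder_sum hp hpq v hv0 (Finset.univ.erase i)
        rw [hcard, hmcast, ← hAq_def, ← htv] at h
        exact h
      have hprodv : ∏ j ∈ Finset.univ.erase i, (1 + v j) ≤ G t := by
        have hne' : (Finset.univ.erase i).Nonempty := by
          rw [← Finset.card_pos, hcard]; omega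
        have h1 := amgm_prod _ hne' v (fun j _ => hv0 j)
        rw [hcard] at h1
        have hSm : (∑ j ∈ Finset.univ.erase i, v j) / (m:ℝ) ≤ t / A := by
          rw [div_le_div_iff₀ (by positivity) hA]
          calc (∑ j ∈ Finset.univ.erase i, v j) * A ≤ (Aq * t) * A := by
                exact mul_le_mul_of_nonneg_right hSsum hA.le
            _ = t * (A * Aq) := by ring
            _ = t * (m:ℝ) := by rw [hAAq, hmcast]
        calc ∏ j ∈ Finset.univ.erase i, (1 + v j)
            ≤ (1 + (∑ j ∈ Finset.univ.erase i, v j) / (m:ℝ)) ^ m := h1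
          _ ≤ (1 + t / A) ^ m := by
              refine pow_le_pow_left₀ ?_ (by linarith) m
              have h2 : (0:ℝ) ≤ ∑ j ∈ Finset.univ.erase i, v j :=
                Finset.sum_nonneg fun j _ => hv0 j
              positivity
          _ = G t := rfl
      have hprodu : ∏ j ∈ Finset.univ.erase i, (1 + ‖u j‖) ≤ G t := by
        refine le_trans (Finset.prod_le_prod (fun j _ => by positivity) fun j hj => ?_) hprodv
        have := huv j hj; linarith
      constructor
      · rw [hstepid, norm_neg, norm_mul, hβ']
        have hb : ‖∏ j ∈ Finset.univ.erase i, (1 + u j) - 1‖ ≤ G t - 1 :=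
          le_trans (_root_.norm_prod_one_add_sub_one_le (Finset.univ.erase i) u) (by linarith)
        calc ‖y i - ξ i‖ * ‖∏ j ∈ Finset.univ.erase i, (1 + u j) - 1‖
            ≤ ‖y i - ξ i‖ * (G t - 1) := mul_le_mul_of_nonneg_left hb (norm_nonneg _)
          _ = (G t - 1) * ‖y i - ξ i‖ := mul_comm _ _
      · rw [hWid, norm_mul]
        have h1 : ‖∏ j ∈ Finset.univ.erase i, (1 + u j)‖ ≤ G t :=
          le_trans (norm_prod_one_add_le _ u) hprodu
        calc ‖y i - ξ i‖ * ‖∏ j ∈ Finset.univ.erase i, (1 + u j)‖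
            ≤ ‖y i - ξ i‖ * G t := mul_le_mul_of_nonneg_left h1 (norm_nonneg _)
          _ = G t * ‖y i - ξ i‖ := mul_comm _ _
    -- pair separation
    have hpair : ∀ i j, j ≠ i →
        ψ t * ‖y i - y j‖ ≤ ‖(y i - Wcorr f y i) - (y j - Wcorr f y j)‖ := by
      intro i j hij
      have hvij : v i + v j ≤ B * t := by
        have h := holder_sum hp hpq v hv0 {i, j}
        rw [Finset.card_pair (Ne.symm hij)] at h
        rw [Finset.sum_pair (Ne.symm hij)] at h
        have hc2 : ((2:ℕ):ℝ) = (2:ℝ) := by norm_num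
        rw [hc2, ← hB_def, ← htv] at h
        exact h
      have hdi : dsep y i ≤ ‖y i - y j‖ := dsep_le hij
      have hdj : dsep y j ≤ ‖y i - y j‖ := by
        rw [norm_sub_rev]; exact dsep_le (Ne.symm hij)
      have hei : ‖y i - ξ i‖ ≤ v i * ‖y i - y j‖ := by
        rw [hvi i]; exact mul_le_mul_of_nonneg_left hdi (hv0 i)
      have hej : ‖y j - ξ j‖ ≤ v j * ‖y i - y j‖ := by
        rw [hvi j]; exact mul_le_mul_of_nonneg_left hdj (hv0 j)
      have hWi : ‖Wcorr f y i‖ ≤ G t * (v i * ‖y i - y j‖) :=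
        le_trans (main i).2 (mul_le_mul_of_nonneg_left hei hGt0)
      have hWj : ‖Wcorr f y j‖ ≤ G t * (v j * ‖y i - y j‖) :=
        le_trans (main j).2 (mul_le_mul_of_nonneg_left hej hGt0)
      have htri : ‖y i - y j‖ - (‖Wcorr f y i‖ + ‖Wcorr f y j‖)
          ≤ ‖(y i - Wcorr f y i) - (y j - Wcorr f y j)‖ := by
        have h1 : (y i - Wcorr f y i) - (y j - Wcorr f y j)
            = (y i - y j) - (Wcorr f y i - Wcorr f y j) := by ring
        rw [h1]
        have h2 := norm_sub_norm_le (y i - y j) (Wcorr f y i - Wcorr f y j)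
        have h3 := norm_sub_le (Wcorr f y i) (Wcorr f y j)
        linarith
      have hnn : (0:ℝ) ≤ ‖y i - y j‖ := norm_nonneg _
      rw [hψ']
      nlinarith [mul_le_mul_of_nonneg_left hvij (mul_nonneg hGt0 hnn)]
    have hψt : 0 < ψ t := hψpos t ht0 hyE
    -- injectivity of the next iterate
    have hinj' : Function.Injective (fun i => y i - Wcorr f y i) := by
      intro a b hab
      by_contra hne'
      have h1 := hpair a b (Ne.symm hne')
      have h2 : (y a - Wcorr f y a) - (y b - Wcorr f y b) = 0 := by
        simp only [] at hab
        rw [hab]; ring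
      rw [h2, norm_zero] at h1
      have h3 : 0 < ‖y a - y b‖ := by
        rw [norm_pos_iff, sub_ne_zero]
        exact fun h => hne' (hyinj h)
      nlinarith
    refine ⟨hinj', fun i => (main i).1, ?_⟩
    -- contraction of E
    have hdsep' : ∀ i, ψ t * dsep y i ≤ dsep (fun i => y i - Wcorr f y i) i := by
      intro i
      refine le_dsep hn fun j hj => ?_
      calc ψ t * dsep y i ≤ ψ t * ‖y i - y j‖ :=
            mul_le_mul_of_nonneg_left (dsep_le hj) hψt.le
        _ ≤ _ := hpair i j hj
    rw [hE]
    have hgoal : β t / ψ t * t = β t / ψ t * pnorm p v := by rw [← htv]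
    rw [hgoal]
    refine pnorm_le_mul hn0 hp (div_nonneg (hβ0 t ht0) hψt.le) ?_ hv0 ?_
    · intro i
      have h2 : 0 < ψ t * dsep y i := mul_pos hψt (hd i)
      exact div_nonneg (norm_nonneg _) (le_trans h2.le (hdsep' i))
    · intro i
      have h1 := (main i).1
      have h2 : 0 < ψ t * dsep y i := mul_pos hψt (hd i)
      calc ‖(fun i => y i - Wcorr f y i) i - ξ i‖ / dsep (fun i => y i - Wcorr f y i) i
          ≤ (β t * ‖y i - ξ i‖) / (ψ t * dsep y i) :=
            div_le_div₀ (mul_nonneg (hβ0 t ht0) (norm_nonneg _)) h1 h2 (hdsep' i)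
        _ = (β t / ψ t) * v i := by rw [mul_div_mul_comm]
  have hψE0 : 0 < ψ E0 := hψpos E0 hE00 le_rfl
  have hBE0 : B * E0 < 1 := by
    have h1 := hg1 E0 hE00
    have h2 : B * E0 * G E0 < 1 := by
      have h3 := hψ' E0
      nlinarith
    nlinarith [mul_nonneg hB.le hE00]
  have hd0 : ∀ i, 0 < dsep (x 0) i := dsep_pos hn hx0
  have hv00 : ∀ i, 0 ≤ ‖x 0 i - ξ i‖ / dsep (x 0) i := fun i =>
    div_nonneg (norm_nonneg _) (hd0 i).le
  have hξinj : Function.Injective ξ := by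
    intro a b hab
    by_contra hne'
    set v0 : Fin n → ℝ := fun i => ‖x 0 i - ξ i‖ / dsep (x 0) i with hv0_def
    have hvab : v0 a + v0 b ≤ B * E0 := by
      have h := holder_sum hp hpq v0 hv00 {a, b}
      rw [Finset.card_pair hne', Finset.sum_pair hne'] at h
      have hc2 : ((2:ℕ):ℝ) = (2:ℝ) := by norm_num
      rw [hc2, ← hB_def] at h
      have hpn : pnorm p v0 = E0 := (hE (x 0)).symm
      rw [hpn] at h
      exact h
    have hdab : dsep (x 0) a ≤ ‖x 0 a - x 0 b‖ := dsep_le (Ne.symm hne')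
    have hdba : dsep (x 0) b ≤ ‖x 0 a - x 0 b‖ := by
      rw [norm_sub_rev]; exact dsep_le hne'
    have hea : ‖x 0 a - ξ a‖ ≤ v0 a * ‖x 0 a - x 0 b‖ := by
      have h1 : ‖x 0 a - ξ a‖ = v0 a * dsep (x 0) a := by
        rw [hv0_def]
        exact (div_mul_cancel₀ _ (hd0 a).ne').symm
      rw [h1]
      exact mul_le_mul_of_nonneg_left hdab (hv00 a)
    have heb : ‖x 0 b - ξ b‖ ≤ v0 b * ‖x 0 a - x 0 b‖ := by
      have h1 : ‖x 0 b - ξ b‖ = v0 b * dsep (x 0) b := by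
        rw [hv0_def]
        exact (div_mul_cancel₀ _ (hd0 b).ne').symm
      rw [h1]
      exact mul_le_mul_of_nonneg_left hdba (hv00 b)
    have hxab : x 0 a - x 0 b = (x 0 a - ξ a) - (x 0 b - ξ b) := by rw [hab]; ring
    have h1 : ‖x 0 a - x 0 b‖ ≤ ‖x 0 a - ξ a‖ + ‖x 0 b - ξ b‖ := by
      rw [hxab]; exact norm_sub_le _ _
    have hpos : 0 < ‖x 0 a - x 0 b‖ := by
      rw [norm_pos_iff, sub_ne_zero]
      exact fun h => hne' (hx0 h)
    nlinarith [mul_le_mul_of_nonneg_right hvab hpos.le]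
  rcases hE00.eq_or_lt with hE0zero | hE0pos
  · -- degenerate case : x 0 = ξ
    have hx0ξ : x 0 = ξ := by
      funext i
      have h1 := coord_le_pnorm hp (fun i => ‖x 0 i - ξ i‖ / dsep (x 0) i) i
      have hpn : pnorm p (fun i => ‖x 0 i - ξ i‖ / dsep (x 0) i) = 0 := by
        rw [← hE (x 0)]
        exact hE0zero.symm
      rw [hpn] at h1
      have h2 : ‖x 0 i - ξ i‖ / dsep (x 0) i = 0 := by
        have h3 := abs_nonneg (‖x 0 i - ξ i‖ / dsep (x 0) i)
        have h4 : |‖x 0 i - ξ i‖ / dsep (x 0) i| = 0 := le_antisymm h1 h3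
        exact abs_eq_zero.1 h4
      have h5 : ‖x 0 i - ξ i‖ = 0 := by
        rcases div_eq_zero_iff.1 h2 with h | h
        · exact h
        · exact absurd h (hd0 i).ne'
      exact sub_eq_zero.1 (norm_eq_zero.1 h5)
    have hallξ : ∀ k, x k = ξ := by
      intro k
      induction k with
      | zero => exact hx0ξ
      | succ k ih =>
        rw [hiter k, ih]
        funext i
        have hW0 : Wcorr f ξ i = 0 := by
          simp only [Wcorr]
          rw [hroot (ξ i), Finset.prod_eq_zero (Finset.mem_univ i) (sub_self (ξ i))]
          simp
        simp [hW0]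
    refine ⟨hξinj, ?_, ?_, ?_, ?_⟩
    · intro k; rw [hallξ k]; exact hξinj
    · intro i; simp only [hallξ]; exact tendsto_const_nhds
    · intro k i; rw [hallξ k, hallξ (k+1)]; simp
    · intro k i; rw [hallξ k, hallξ 0]; simp
  · -- main case
    set th : ℝ := ψ E0 with hth_def
    set lam : ℝ := β E0 / th with hlam_def
    have hth0 : 0 < th := hψE0
    have hth1 : th ≤ 1 := hψle1 E0 hE00
    have hlam0 : 0 ≤ lam := div_nonneg (hβ0 E0 hE00) hth0.le
    have hlam1 : lam ≤ 1 := by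
      rw [hlam_def, div_le_one hth0]
      exact hβψ E0 hE00 le_rfl
    have hβE0 : β E0 = th * lam := by
      rw [hlam_def]
      field_simp
    have hpow1 : ∀ k : ℕ, (1:ℕ) ≤ 2 ^ k := fun k => Nat.one_le_two_pow
    have hexp2 : ∀ k : ℕ, 2 ^ k + (2 ^ k - 1) = 2 ^ (k + 1) - 1 := by
      intro k
      have h := hpow1 k
      rw [pow_succ]
      omega
    have hEknn : ∀ k, 0 ≤ E (x k) := by
      intro k; rw [hE]; exact pnorm_nonneg p _
    have hβk_gen : ∀ k : ℕ, E (x k) ≤ E0 * lam ^ (2 ^ k - 1) →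
        β (E (x k)) ≤ th * lam ^ 2 ^ k := by
      intro k hEk
      have hEkE0 : E (x k) ≤ E0 := by
        calc E (x k) ≤ E0 * lam ^ (2 ^ k - 1) := hEk
          _ ≤ E0 * 1 := mul_le_mul_of_nonneg_left (pow_le_one₀ hlam0 hlam1) hE00
          _ = E0 := mul_one E0
      have h1 := hslope hE0pos (E (x k)) (hEknn k) hEkE0
      have h2 : β (E (x k)) ≤ β E0 * lam ^ (2 ^ k - 1) := by
        have h3 : β (E (x k)) * E0 ≤ (β E0 * lam ^ (2 ^ k - 1)) * E0 := by
          calc β (E (x k)) * E0 ≤ β E0 * E (x k) := h1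
            _ ≤ β E0 * (E0 * lam ^ (2 ^ k - 1)) :=
                mul_le_mul_of_nonneg_left hEk (hβ0 E0 hE00)
            _ = (β E0 * lam ^ (2 ^ k - 1)) * E0 := by ring
        exact le_of_mul_le_mul_right h3 hE0pos
      have hsub : 2 ^ k - 1 + 1 = 2 ^ k := Nat.sub_add_cancel (hpow1 k)
      calc β (E (x k)) ≤ β E0 * lam ^ (2 ^ k - 1) := h2
        _ = th * (lam * lam ^ (2 ^ k - 1)) := by rw [hβE0]; ring
        _ = th * lam ^ 2 ^ k := by rw [← pow_succ', hsub]
    have inv : ∀ k : ℕ, Function.Injective (x k) ∧ E (x k) ≤ E0 * lam ^ (2 ^ k - 1) ∧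
        (∀ i, ‖x k i - ξ i‖ ≤ th ^ k * lam ^ (2 ^ k - 1) * ‖x 0 i - ξ i‖) := by
      intro k
      induction k with
      | zero =>
        refine ⟨hx0, by simp; exact le_rfl, fun i => by simp⟩
      | succ k ih =>
        obtain ⟨hinjk, hEk, hcoordk⟩ := ih
        have hEkE0 : E (x k) ≤ E0 := by
          calc E (x k) ≤ E0 * lam ^ (2 ^ k - 1) := hEk
            _ ≤ E0 * 1 := mul_le_mul_of_nonneg_left (pow_le_one₀ hlam0 hlam1) hE00
            _ = E0 := mul_one E0
        obtain ⟨hinj', hcoord', hE'⟩ := step (x k) hinjk hEkE0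
        have hβk := hβk_gen k hEk
        have hinj'' : Function.Injective (x (k+1)) := by
          rw [hiter k]; exact hinj'
        have hcoord'' : ∀ i, ‖x (k+1) i - ξ i‖ ≤ β (E (x k)) * ‖x k i - ξ i‖ := by
          intro i
          have h0 : x (k+1) i = x k i - Wcorr f (x k) i := by rw [hiter k]
          rw [h0]
          exact hcoord' i
        have hE'' : E (x (k+1)) ≤ β (E (x k)) / ψ (E (x k)) * E (x k) := by
          rw [hiter k]
          exact hE'
        refine ⟨hinj'', ?_, ?_⟩
        · have hψk : th ≤ ψ (E (x k)) := hψanti (E (x k)) E0 (hEknn k) hEkE0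
          have hψkpos : 0 < ψ (E (x k)) := hψpos _ (hEknn k) hEkE0
          have hdiv : β (E (x k)) / ψ (E (x k)) ≤ lam ^ 2 ^ k := by
            rw [div_le_iff₀ hψkpos]
            calc β (E (x k)) ≤ th * lam ^ 2 ^ k := hβk
              _ ≤ ψ (E (x k)) * lam ^ 2 ^ k :=
                  mul_le_mul_of_nonneg_right hψk (pow_nonneg hlam0 _)
              _ = lam ^ 2 ^ k * ψ (E (x k)) := mul_comm _ _
          calc E (x (k+1)) ≤ (β (E (x k)) / ψ (E (x k))) * E (x k) := hE''
            _ ≤ lam ^ 2 ^ k * (E0 * lam ^ (2 ^ k - 1)) :=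
                mul_le_mul hdiv hEk (hEknn k) (pow_nonneg hlam0 _)
            _ = E0 * (lam ^ 2 ^ k * lam ^ (2 ^ k - 1)) := by ring
            _ = E0 * lam ^ (2 ^ (k+1) - 1) := by rw [← pow_add, hexp2 k]
        · intro i
          calc ‖x (k+1) i - ξ i‖ ≤ β (E (x k)) * ‖x k i - ξ i‖ := hcoord'' i
            _ ≤ (th * lam ^ 2 ^ k) * (th ^ k * lam ^ (2 ^ k - 1) * ‖x 0 i - ξ i‖) :=
                mul_le_mul hβk (hcoordk i) (norm_nonneg _)
                  (mul_nonneg hth0.le (pow_nonneg hlam0 _))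
            _ = (th ^ (k+1)) * (lam ^ 2 ^ k * lam ^ (2 ^ k - 1)) * ‖x 0 i - ξ i‖ := by
                ring
            _ = th ^ (k+1) * lam ^ (2 ^ (k+1) - 1) * ‖x 0 i - ξ i‖ := by
                rw [← pow_add, hexp2 k]
    have concl4 : ∀ k i, ‖x (k+1) i - ξ i‖ ≤ th * lam ^ 2 ^ k * ‖x k i - ξ i‖ := by
      intro k i
      obtain ⟨hinjk, hEk, -⟩ := inv k
      have hEkE0 : E (x k) ≤ E0 := by
        calc E (x k) ≤ E0 * lam ^ (2 ^ k - 1) := hEk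
          _ ≤ E0 * 1 := mul_le_mul_of_nonneg_left (pow_le_one₀ hlam0 hlam1) hE00
          _ = E0 := mul_one E0
      obtain ⟨-, hcoord', -⟩ := step (x k) hinjk hEkE0
      have hcoord'' : ‖x (k+1) i - ξ i‖ ≤ β (E (x k)) * ‖x k i - ξ i‖ := by
        have h0 : x (k+1) i = x k i - Wcorr f (x k) i := by rw [hiter k]
        rw [h0]
        exact hcoord' i
      calc ‖x (k+1) i - ξ i‖ ≤ β (E (x k)) * ‖x k i - ξ i‖ := hcoord''
        _ ≤ th * lam ^ 2 ^ k * ‖x k i - ξ i‖ :=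
            mul_le_mul_of_nonneg_right (hβk_gen k hEk) (norm_nonneg _)
    have hthlt1 : th < 1 := by
      rw [hth_def, hψ']
      have h1 := hg1 E0 hE00
      nlinarith [mul_pos (mul_pos hB hE0pos) (lt_of_lt_of_le one_pos (hg1 E0 hE00))]
    have htendsto : ∀ i, Filter.Tendsto (fun k => x k i) Filter.atTop (nhds (ξ i)) := by
      intro i
      rw [tendsto_iff_norm_sub_tendsto_zero]
      have hb : ∀ k, ‖x k i - ξ i‖ ≤ th ^ k * ‖x 0 i - ξ i‖ := by
        intro k
        obtain ⟨-, -, hco⟩ := inv k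
        calc ‖x k i - ξ i‖ ≤ th ^ k * lam ^ (2 ^ k - 1) * ‖x 0 i - ξ i‖ := hco i
          _ ≤ th ^ k * 1 * ‖x 0 i - ξ i‖ := by
              refine mul_le_mul_of_nonneg_right ?_ (norm_nonneg _)
              exact mul_le_mul_of_nonneg_left (pow_le_one₀ hlam0 hlam1)
                (pow_nonneg hth0.le k)
          _ = th ^ k * ‖x 0 i - ξ i‖ := by ring
      refine squeeze_zero (fun k => norm_nonneg _) hb ?_
      have h2 := tendsto_pow_atTop_nhds_zero_of_lt_one hth0.le hthlt1
      simpa using h2.mul_const ‖x 0 i - ξ i‖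
    exact ⟨hξinj, fun k => (inv k).1, htendsto, concl4, fun k i => (inv k).2.2 i⟩
end

section
/- Let (K,|·|) be a normed field and f ∈ K[z] a polynomial of degree n ≥ 2. Let (x^k) be a sequence of vectors in Kⁿ, each having pairwise distinct components, such that (x^k) converges to some ξ ∈ Kⁿ (componentwise, i.e. |x^k_i − ξ_i| → 0 for every i) and the Weierstrass corrections converge to zero, i.e. |W_i(x^k)| → 0 for every i. Then ξ is a root-vector of f, i.e. f(z) = a₀ ∏_{i=1}^n (z − ξ_i) for all z ∈ K, where a₀ is the leading coefficient of f. -/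
open Finset Filter Topology
open scoped ENNReal

open Polynomial in
lemma weierstrass_key {K : Type*} [NormedField K] {n : ℕ} (hn : 1 ≤ n)
    (f : Polynomial K) (hdeg : f.natDegree = n)
    (x : Fin n → K) (hx : Function.Injective x) (z : K) :
    Polynomial.eval z f = f.leadingCoeff * ∏ j, (z - x j) +
      ∑ i, Wcorr f x i * (f.leadingCoeff * ∏ j ∈ Finset.univ.erase i, (z - x j)) := by
  classical
  set a := f.leadingCoeff with ha
  have hf0 : f ≠ 0 := fun h => by simp [h] at hdeg; omega
  have ha0 : a ≠ 0 := leadingCoeff_ne_zero.mpr hf0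
  set P : K[X] := C a * ∏ j, (X - C (x j)) with hP
  set Q : K[X] := ∑ i, C (Wcorr f x i * a) * ∏ j ∈ Finset.univ.erase i, (X - C (x j)) with hQ
  have hmon : (∏ j, (X - C (x j)) : K[X]).Monic :=
    monic_prod_of_monic _ _ fun _ _ => monic_X_sub_C _
  have hPdeg : P.degree = n := by
    rw [hP, degree_C_mul ha0, Polynomial.degree_prod]
    simp [degree_X_sub_C]
  have hPdeg' : P.degree = f.degree := by
    rw [hPdeg, degree_eq_natDegree hf0, hdeg]
  have hPlc : P.leadingCoeff = a := by
    rw [hP, leadingCoeff_mul, leadingCoeff_C, hmon.leadingCoeff, mul_one]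
  have hQdeg : Q.degree < n := by
    apply lt_of_le_of_lt (degree_sum_le _ _)
    apply Finset.sup_lt_iff (by exact_mod_cast WithBot.bot_lt_coe n) |>.mpr
    intro i _
    calc (C (Wcorr f x i * a) * ∏ j ∈ Finset.univ.erase i, (X - C (x j))).degree
        ≤ 0 + (∏ j ∈ Finset.univ.erase i, (X - C (x j)) : K[X]).degree :=
          le_trans (degree_mul_le _ _) (add_le_add_left (degree_C_le) _)
      _ = ((n - 1 : ℕ) : WithBot ℕ) := by
          rw [zero_add, Polynomial.degree_prod]
          simp [degree_X_sub_C, Finset.card_erase_of_mem]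
      _ < (n : WithBot ℕ) := by exact_mod_cast Nat.sub_lt (by omega) one_pos
  have hdenom : ∀ i : Fin n, a * ∏ j ∈ Finset.univ.erase i, (x i - x j) ≠ 0 := by
    intro i
    refine mul_ne_zero ha0 (Finset.prod_ne_zero_iff.mpr fun j hj => ?_)
    have : j ≠ i := (Finset.mem_erase.mp hj).1
    exact sub_ne_zero_of_ne fun h => this (hx h.symm)
  have hPev : ∀ i : Fin n, P.eval (x i) = 0 := by
    intro i
    rw [hP]
    simp only [eval_mul, eval_prod, eval_sub, eval_X, eval_C]
    rw [Finset.prod_eq_zero (Finset.mem_univ i) (sub_self (x i)), mul_zero]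
  have hQev : ∀ i : Fin n, Q.eval (x i) = f.eval (x i) := by
    intro i
    rw [hQ]
    simp only [eval_finset_sum, eval_mul, eval_prod, eval_sub, eval_X, eval_C]
    rw [Finset.sum_eq_single i]
    · rw [Wcorr, ← ha, div_mul_eq_mul_div, div_mul_eq_mul_div, div_eq_iff (hdenom i)]
      ring
    · intro b _ hb
      rw [Finset.prod_eq_zero (Finset.mem_erase.mpr ⟨hb.symm, Finset.mem_univ i⟩) (sub_self (x i)),
        mul_zero]
    · intro h; exact absurd (Finset.mem_univ i) h
  have hzero : f - (P + Q) = 0 := by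
    apply Polynomial.eq_zero_of_natDegree_lt_card_of_eval_eq_zero _ hx
    · intro i
      simp [hPev i, hQev i]
    · rw [Fintype.card_fin]
      rcases eq_or_ne (f - (P + Q)) 0 with h | h
      · simp [h]; omega
      · rw [Polynomial.natDegree_lt_iff_degree_lt h]
        calc (f - (P + Q)).degree = ((f - P) - Q).degree := by ring_nf
          _ ≤ max (f - P).degree Q.degree := degree_sub_le _ _
          _ < n := by
              refine max_lt ?_ hQdeg
              calc (f - P).degree < f.degree := degree_sub_lt hPdeg'.symm hf0 hPlc.symm
                _ ≤ n := by rw [degree_eq_natDegree hf0, hdeg]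
  have hfeq : f = P + Q := by linear_combination (norm := ring_nf) hzero
  calc f.eval z = (P + Q).eval z := by rw [← hfeq]
    _ = _ := by
        rw [hP, hQ]
        simp [eval_finset_sum, eval_prod, mul_assoc]

/-- basic existence theorem. If a sequence of vectors with pairwise
distinct components converges componentwise to `ξ` and the Weierstrass corrections
tend to zero componentwise, then `ξ` is a root-vector of `f`. -/
theorem root_vector_of_weierstrass_limit
    {K : Type*} [NormedField K] {n : ℕ} (hn : 2 ≤ n)
    (f : Polynomial K) (hdeg : f.natDegree = n)
    (x : ℕ → Fin n → K) (hx : ∀ k : ℕ, Function.Injective (x k))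
    (ξ : Fin n → K)
    (hconv : ∀ i : Fin n, Filter.Tendsto (fun k => x k i) Filter.atTop (nhds (ξ i)))
    (hW : ∀ i : Fin n,
      Filter.Tendsto (fun k => ‖Wcorr f (x k) i‖) Filter.atTop (nhds 0)) :
    IsRootVector f ξ := by
  intro z
  set a := f.leadingCoeff
  have key : ∀ k : ℕ, Polynomial.eval z f = a * ∏ j, (z - x k j) +
      ∑ i, Wcorr f (x k) i * (a * ∏ j ∈ Finset.univ.erase i, (z - x k j)) :=
    fun k => weierstrass_key (by omega) f hdeg (x k) (hx k) z
  have h1 : Filter.Tendsto (fun k => a * ∏ j, (z - x k j)) Filter.atTop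
      (nhds (a * ∏ j, (z - ξ j))) := by
    exact (tendsto_finset_prod _ fun j _ => tendsto_const_nhds.sub (hconv j)).const_mul a
  have h2 : Filter.Tendsto
      (fun k => ∑ i, Wcorr f (x k) i * (a * ∏ j ∈ Finset.univ.erase i, (z - x k j)))
      Filter.atTop (nhds 0) := by
    have : Filter.Tendsto
        (fun k => ∑ i, Wcorr f (x k) i * (a * ∏ j ∈ Finset.univ.erase i, (z - x k j)))
        Filter.atTop (nhds (∑ i : Fin n, (0 : K) * (a * ∏ j ∈ Finset.univ.erase i, (z - ξ j)))) := by
      refine tendsto_finset_sum _ fun i _ => Filter.Tendsto.mul ?_ ?_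
      · exact tendsto_zero_iff_norm_tendsto_zero.mpr (hW i)
      · exact (tendsto_finset_prod _ fun j _ => tendsto_const_nhds.sub (hconv j)).const_mul a
    simpa using this
  have := h1.add h2
  rw [add_zero] at this
  have hconst : Filter.Tendsto (fun _ : ℕ => Polynomial.eval z f) Filter.atTop
      (nhds (Polynomial.eval z f)) := tendsto_const_nhds
  have heq : (fun k : ℕ => Polynomial.eval z f) = fun k => a * ∏ j, (z - x k j) +
      ∑ i, Wcorr f (x k) i * (a * ∏ j ∈ Finset.univ.erase i, (z - x k j)) :=
    funext key
  rw [heq] at hconst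
  exact tendsto_nhds_unique hconst this
end
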